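/- Let g be a metric on an open set U ⊆ ℝ⁴, let X be a smooth vector field on U, and let φ : U → ℝ be smooth. Then pointwise on U one has the commutator identity □_g(Xφ) − X(□_gφ) = (∇_α π̂^{αβ} ∇_β)φ − (1/2)(g_{γδ}π̂^{γδ}) □_gφ, where π̂ is the normalized deformation tensor of X. -/

import Mathlib

noncomputable section

/-- Points of the coordinate chart `ℝ⁴`. -/
abbrev Pt : Type := Fin 4 → ℝ

/-- Coordinate partial derivative `∂_α f`. -/
def pd (α : Fin 4) (f : Pt → ℝ) (x : Pt) : ℝ :=
  fderiv ℝ f x (Pi.single α (1 : ℝ))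

/-- `|g| = |det (g_{αβ})|`. -/
def adet (g : Pt → Matrix (Fin 4) (Fin 4) ℝ) (x : Pt) : ℝ := |(g x).det|

/-- Inverse metric `g^{αβ}`. -/
def ginv (g : Pt → Matrix (Fin 4) (Fin 4) ℝ) (x : Pt) : Matrix (Fin 4) (Fin 4) ℝ := (g x)⁻¹

/-- The wave operator `□_g φ = |g|^{-1/2} ∂_α(|g|^{1/2} g^{αβ} ∂_β φ)`. -/
def boxg (g : Pt → Matrix (Fin 4) (Fin 4) ℝ) (φ : Pt → ℝ) (x : Pt) : ℝ :=
  (Real.sqrt (adet g x))⁻¹ *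
    ∑ α : Fin 4, pd α (fun y => Real.sqrt (adet g y) * ∑ β : Fin 4, ginv g y α β * pd β φ y) x

/-- `X f = X^α ∂_α f`. -/
def Xapp (X : Fin 4 → Pt → ℝ) (f : Pt → ℝ) (x : Pt) : ℝ := ∑ γ : Fin 4, X γ x * pd γ f x

/-- A smooth symmetric everywhere-nondegenerate metric on `U`. -/
structure IsMetricOn (g : Pt → Matrix (Fin 4) (Fin 4) ℝ) (U : Set Pt) : Prop where
  smooth : ∀ α β : Fin 4, ContDiffOn ℝ (⊤ : ℕ∞) (fun x => g x α β) U
  symm : ∀ x ∈ U, ∀ α β : Fin 4, g x α β = g x β α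
  det_ne : ∀ x ∈ U, (g x).det ≠ 0

/-- Deformation tensor `π_{αβ} = (L_X g)_{αβ}` of `X` (lower indices). -/
def piLow (g : Pt → Matrix (Fin 4) (Fin 4) ℝ) (X : Fin 4 → Pt → ℝ) (x : Pt) (α β : Fin 4) : ℝ :=
  (∑ γ : Fin 4, X γ x * pd γ (fun y => g y α β) x)
    + (∑ γ : Fin 4, g x γ β * pd α (X γ) x) + (∑ γ : Fin 4, g x α γ * pd β (X γ) x)

/-- Raised deformation tensor `π^{αβ}`. -/
def piUp (g : Pt → Matrix (Fin 4) (Fin 4) ℝ) (X : Fin 4 → Pt → ℝ) (x : Pt) (α β : Fin 4) : ℝ :=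
  ∑ α' : Fin 4, ∑ β' : Fin 4, ginv g x α α' * ginv g x β β' * piLow g X x α' β'

/-- Normalized deformation tensor `π̂^{αβ} = π^{αβ} - (1/2) g^{αβ} (g_{γδ} π^{γδ})`. -/
def hatPi (g : Pt → Matrix (Fin 4) (Fin 4) ℝ) (X : Fin 4 → Pt → ℝ) (x : Pt) (α β : Fin 4) : ℝ :=
  piUp g X x α β - (1/2) * ginv g x α β * (∑ γ : Fin 4, ∑ δ : Fin 4, g x γ δ * piUp g X x γ δ)

/-- Second-order operator `(∇_α R^{αβ} ∇_β)φ = |g|^{-1/2}∂_α(|g|^{1/2} R^{αβ} ∂_βφ)`. -/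
def divForm (g : Pt → Matrix (Fin 4) (Fin 4) ℝ) (R : Pt → Fin 4 → Fin 4 → ℝ)
    (φ : Pt → ℝ) (x : Pt) : ℝ :=
  (Real.sqrt (adet g x))⁻¹ *
    ∑ α : Fin 4, pd α (fun y => Real.sqrt (adet g y) * ∑ β : Fin 4, R y α β * pd β φ y) x

-- infrastructure
def SOn (U : Set Pt) (f : Pt → ℝ) : Prop := ContDiffOn ℝ (⊤ : ℕ∞) f U

namespace SOn

variable {U : Set Pt} {f h : Pt → ℝ}

theorem add (hf : SOn U f) (hh : SOn U h) : SOn U (fun y => f y + h y) := ContDiffOn.add hf hh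
theorem mul (hf : SOn U f) (hh : SOn U h) : SOn U (fun y => f y * h y) := ContDiffOn.mul hf hh
theorem sub (hf : SOn U f) (hh : SOn U h) : SOn U (fun y => f y - h y) := ContDiffOn.sub hf hh
theorem neg (hf : SOn U f) : SOn U (fun y => -f y) := ContDiffOn.neg hf
theorem const (c : ℝ) : SOn U (fun _ => c) := contDiffOn_const
theorem inv (hf : SOn U f) (h0 : ∀ x ∈ U, f x ≠ 0) : SOn U (fun y => (f y)⁻¹) :=
  ContDiffOn.inv hf h0
theorem sum {ι : Type*} {s : Finset ι} {F : ι → Pt → ℝ} (hF : ∀ i ∈ s, SOn U (F i)) :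
    SOn U (fun y => ∑ i ∈ s, F i y) := ContDiffOn.sum hF
theorem smul (c : ℝ) (hf : SOn U f) : SOn U (fun y => c * f y) := (const c).mul hf

theorem contDiffAt (hf : SOn U f) (hU : IsOpen U) {x : Pt} (hx : x ∈ U) :
    ContDiffAt ℝ (⊤ : ℕ∞) f x := ContDiffOn.contDiffAt hf (hU.mem_nhds hx)

theorem diffAt (hf : SOn U f) (hU : IsOpen U) {x : Pt} (hx : x ∈ U) :
    DifferentiableAt ℝ f x :=
  (contDiffAt hf hU hx).differentiableAt (by simp)

theorem pd (hf : SOn U f) (hU : IsOpen U) (a : Fin 4) : SOn U (fun y => pd a f y) := by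
  have h1 : ContDiffOn ℝ (⊤ : ℕ∞) (fderiv ℝ f) U := by
    have := (contDiffOn_infty_iff_fderiv_of_isOpen (𝕜 := ℝ) (f := f) hU).1 hf
    exact this.2
  exact h1.clm_apply contDiffOn_const

end SOn

section pdlemmas

variable {U : Set Pt} {f h : Pt → ℝ} {x : Pt} {a b : Fin 4}

theorem pd_congr (hfh : f =ᶠ[nhds x] h) : pd a f x = pd a h x := by
  unfold pd; rw [hfh.fderiv_eq]

theorem pd_congr_on (hU : IsOpen U) (hx : x ∈ U) (hfh : ∀ y ∈ U, f y = h y) :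
    pd a f x = pd a h x :=
  pd_congr (Filter.eventually_of_mem (hU.mem_nhds hx) hfh)

theorem pd_add (hf : DifferentiableAt ℝ f x) (hh : DifferentiableAt ℝ h x) :
    pd a (fun y => f y + h y) x = pd a f x + pd a h x := by
  unfold pd; rw [fderiv_fun_add hf hh]; rfl

theorem pd_mul (hf : DifferentiableAt ℝ f x) (hh : DifferentiableAt ℝ h x) :
    pd a (fun y => f y * h y) x = pd a f x * h x + f x * pd a h x := by
  unfold pd; rw [fderiv_fun_mul hf hh]; simp; ring

theorem pd_const (c : ℝ) : pd a (fun _ => c) x = 0 := by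
  unfold pd; rw [fderiv_fun_const]; rfl

theorem pd_const_mul (c : ℝ) (hf : DifferentiableAt ℝ f x) :
    pd a (fun y => c * f y) x = c * pd a f x := by
  unfold pd; rw [fderiv_const_mul hf]; rfl

theorem pd_sum {ι : Type*} {s : Finset ι} {F : ι → Pt → ℝ}
    (hF : ∀ i ∈ s, DifferentiableAt ℝ (F i) x) :
    pd a (fun y => ∑ i ∈ s, F i y) x = ∑ i ∈ s, pd a (F i) x := by
  unfold pd; rw [fderiv_fun_sum hF]; simp

theorem pd_inv (hf : DifferentiableAt ℝ f x) (h0 : f x ≠ 0) :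
    pd a (fun y => (f y)⁻¹) x = -(f x ^ 2)⁻¹ * pd a f x := by
  unfold pd
  have : (fun y => (f y)⁻¹) = (fun y : ℝ => y⁻¹) ∘ f := rfl
  rw [this, ((hasDerivAt_inv h0).comp_hasFDerivAt x hf.hasFDerivAt).fderiv]
  simp

theorem pd_comm (hU : IsOpen U) (hf : SOn U f) (hx : x ∈ U) :
    pd a (fun y => pd b f y) x = pd b (fun y => pd a f y) x := by
  have hC : ∀ n : ℕ, ContDiffAt ℝ n f x :=
    contDiffAt_infty.1 (hf.contDiffAt hU hx)
  have hsymm : IsSymmSndFDerivAt ℝ f x :=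
    (hC 2).isSymmSndFDerivAt (by norm_num)
  have hdf : DifferentiableAt ℝ (fderiv ℝ f) x := by
    have h2 := (hC 2).fderiv_right (m := 1) (by norm_num)
    exact h2.differentiableAt (by norm_num)
  have key : ∀ u v : Pt, pd a (fun y => fderiv ℝ f y v) x = fderiv ℝ (fderiv ℝ f) x (Pi.single a 1) v := by
    intro u v
    unfold pd
    rw [fderiv_clm_apply hdf (differentiableAt_const v)]
    simp
  unfold pd
  rw [show (fun y => fderiv ℝ f y (Pi.single b 1)) = (fun y => fderiv ℝ f y (Pi.single b 1)) from rfl]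
  have e1 : fderiv ℝ (fun y => fderiv ℝ f y (Pi.single b 1)) x (Pi.single a 1)
      = fderiv ℝ (fderiv ℝ f) x (Pi.single a 1) (Pi.single b 1) := by
    rw [fderiv_clm_apply hdf (differentiableAt_const _)]; simp
  have e2 : fderiv ℝ (fun y => fderiv ℝ f y (Pi.single a 1)) x (Pi.single b 1)
      = fderiv ℝ (fderiv ℝ f) x (Pi.single b 1) (Pi.single a 1) := by
    rw [fderiv_clm_apply hdf (differentiableAt_const _)]; simp
  rw [e1, e2, hsymm]

end pdlemmas


-- ## Part 2: metric lemmas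

theorem SOn.prod {U : Set Pt} {ι : Type*} [DecidableEq ι] {s : Finset ι} {F : ι → Pt → ℝ}
    (hF : ∀ i ∈ s, SOn U (F i)) : SOn U (fun y => ∏ i ∈ s, F i y) := by
  classical
  induction s using Finset.induction_on with
  | empty => simpa using SOn.const 1
  | insert a t hnotmem ih =>
    simp only [Finset.prod_insert hnotmem]
    exact (hF a (Finset.mem_insert_self a t)).mul
      (ih fun i hi => hF i (Finset.mem_insert_of_mem hi))

theorem pd_prod {x : Pt} {ι : Type*} [DecidableEq ι] {s : Finset ι} {F : ι → Pt → ℝ} (c : Fin 4)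
    (hF : ∀ i ∈ s, DifferentiableAt ℝ (F i) x) :
    pd c (fun y => ∏ i ∈ s, F i y) x
      = ∑ i ∈ s, (∏ j ∈ s.erase i, F j x) * pd c (F i) x := by
  unfold pd
  rw [show (fun y => ∏ i ∈ s, F i y) = (∏ i ∈ s, F i ·) from rfl, fderiv_finset_prod hF]
  simp

theorem SOn_det_of_entries {U : Set Pt} {M : Pt → Matrix (Fin 4) (Fin 4) ℝ}
    (hM : ∀ a b : Fin 4, SOn U (fun y => M y a b)) : SOn U (fun y => (M y).det) := by
  have : (fun y => (M y).det)
      = fun y => ∑ σ : Equiv.Perm (Fin 4), ((Equiv.Perm.sign σ : ℤ) : ℝ) * ∏ i, M y (σ i) i := by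
    funext y; rw [Matrix.det_apply]; simp [Units.smul_def, zsmul_eq_mul]
  rw [this]
  exact SOn.sum fun σ _ => SOn.smul _ (SOn.prod fun i _ => hM (σ i) i)

theorem SOn_adj {U : Set Pt} {M : Pt → Matrix (Fin 4) (Fin 4) ℝ}
    (hM : ∀ a b : Fin 4, SOn U (fun y => M y a b)) (a b : Fin 4) :
    SOn U (fun y => (M y).adjugate a b) := by
  have : (fun y => (M y).adjugate a b)
      = fun y => ((M y).updateRow b (Pi.single a 1)).det := by
    funext y; rw [Matrix.adjugate_apply]
  rw [this]
  refine SOn_det_of_entries fun c d => ?_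
  rcases eq_or_ne c b with rfl | hcb
  · simpa [Matrix.updateRow_apply] using SOn.const (U := U) (Pi.single (M := fun _ => ℝ) a 1 d)
  · simpa [Matrix.updateRow_apply, hcb] using hM c d

section Metric

variable {U : Set Pt} {g : Pt → Matrix (Fin 4) (Fin 4) ℝ} {x : Pt}

theorem SOn_g (hg : IsMetricOn g U) (a b : Fin 4) : SOn U (fun y => g y a b) := hg.smooth a b

theorem SOn_det (hg : IsMetricOn g U) : SOn U (fun y => (g y).det) :=
  SOn_det_of_entries hg.smooth

theorem SOn_ginv (hg : IsMetricOn g U) (a b : Fin 4) : SOn U (fun y => ginv g y a b) := by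
  have : (fun y => ginv g y a b) = fun y => ((g y).det)⁻¹ * (g y).adjugate a b := by
    funext y
    rw [ginv, Matrix.inv_def, Matrix.smul_apply, Ring.inverse_eq_inv', smul_eq_mul]
  rw [this]
  exact ((SOn_det hg).inv hg.det_ne).mul (SOn_adj hg.smooth a b)

theorem SOn_w (hU : IsOpen U) (hg : IsMetricOn g U) :
    SOn U (fun y => Real.sqrt (adet g y)) := by
  intro x hx
  apply ContDiffAt.contDiffWithinAt
  have hcont : ContinuousAt (fun y => (g y).det) x :=
    ((SOn_det hg).contDiffAt hU hx).continuousAt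
  rcases (hg.det_ne x hx).lt_or_gt with hneg | hpos
  · have hev : (fun y => Real.sqrt (adet g y)) =ᶠ[nhds x] fun y => Real.sqrt (-(g y).det) := by
      filter_upwards [hcont.eventually_lt_const hneg] with y hy
      rw [adet, abs_of_neg hy]
    refine ContDiffAt.congr_of_eventuallyEq ?_ hev
    exact (Real.contDiffAt_sqrt (by linarith)).comp x ((SOn_det hg).contDiffAt hU hx).neg
  · have hev : (fun y => Real.sqrt (adet g y)) =ᶠ[nhds x] fun y => Real.sqrt ((g y).det) := by
      filter_upwards [hcont.eventually_const_lt hpos] with y hy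
      rw [adet, abs_of_pos hy]
    refine ContDiffAt.congr_of_eventuallyEq ?_ hev
    exact (Real.contDiffAt_sqrt hpos.ne').comp x ((SOn_det hg).contDiffAt hU hx)

theorem w_pos (hg : IsMetricOn g U) (hx : x ∈ U) : 0 < Real.sqrt (adet g x) :=
  Real.sqrt_pos.2 (abs_pos.2 (hg.det_ne x hx))

theorem w_sq (hg : IsMetricOn g U) (hx : x ∈ U) :
    Real.sqrt (adet g x) ^ 2 = adet g x :=
  Real.sq_sqrt (abs_nonneg _)

theorem ginv_mul_g (hg : IsMetricOn g U) (hx : x ∈ U) (a b : Fin 4) :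
    ∑ c : Fin 4, ginv g x a c * g x c b = if a = b then 1 else 0 := by
  have h := Matrix.nonsing_inv_mul (g x) (isUnit_iff_ne_zero.2 (hg.det_ne x hx))
  have h2 := congrFun (congrFun h a) b
  rw [Matrix.mul_apply] at h2
  simpa [ginv, Matrix.one_apply] using h2

theorem g_mul_ginv (hg : IsMetricOn g U) (hx : x ∈ U) (a b : Fin 4) :
    ∑ c : Fin 4, g x a c * ginv g x c b = if a = b then 1 else 0 := by
  have h := Matrix.mul_nonsing_inv (g x) (isUnit_iff_ne_zero.2 (hg.det_ne x hx))
  have h2 := congrFun (congrFun h a) b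
  rw [Matrix.mul_apply] at h2
  simpa [ginv, Matrix.one_apply] using h2

theorem ginv_symm (hg : IsMetricOn g U) (hx : x ∈ U) (a b : Fin 4) :
    ginv g x a b = ginv g x b a := by
  have hsy : (g x).transpose = g x := by
    ext a b; exact hg.symm x hx b a
  have h := Matrix.transpose_nonsing_inv (g x)
  rw [hsy] at h
  have h2 := congrFun (congrFun h a) b
  rw [Matrix.transpose_apply] at h2
  rw [ginv, ← h2]

end Metric

-- ## Jacobi formula and derivative of the inverse metric

theorem pd_det_at_one {U : Set Pt} {B : Pt → Matrix (Fin 4) (Fin 4) ℝ} {x : Pt}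
    (hU : IsOpen U) (hB : ∀ a b : Fin 4, SOn U (fun y => B y a b)) (hx : x ∈ U)
    (h1 : B x = 1) (c : Fin 4) :
    pd c (fun y => (B y).det) x = ∑ i : Fin 4, pd c (fun y => B y i i) x := by
  classical
  have hdet : (fun y => (B y).det)
      = fun y => ∑ σ : Equiv.Perm (Fin 4), ((Equiv.Perm.sign σ : ℤ) : ℝ) * ∏ i, B y (σ i) i := by
    funext y; rw [Matrix.det_apply]; simp [Units.smul_def, zsmul_eq_mul]
  rw [hdet]
  have hdiffE : ∀ (a b : Fin 4), DifferentiableAt ℝ (fun y => B y a b) x :=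
    fun a b => (hB a b).diffAt hU hx
  rw [pd_sum (fun σ _ => ((SOn.prod (fun i _ => hB (σ i) i)).diffAt hU hx).const_mul _)]
  have hterm : ∀ σ : Equiv.Perm (Fin 4),
      pd c (fun y => ((Equiv.Perm.sign σ : ℤ) : ℝ) * ∏ i, B y (σ i) i) x
      = ((Equiv.Perm.sign σ : ℤ) : ℝ) *
          ∑ i : Fin 4, (∏ j ∈ Finset.univ.erase i, B x (σ j) j) * pd c (fun y => B y (σ i) i) x := by
    intro σ
    rw [pd_const_mul _ ((SOn.prod (fun i _ => hB (σ i) i)).diffAt hU hx),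
      pd_prod c (fun i _ => hdiffE (σ i) i)]
  simp only [hterm]
  rw [Finset.sum_eq_single (1 : Equiv.Perm (Fin 4))]
  · simp [h1, Matrix.one_apply]
  · intro σ _ hσ
    have : ∀ i : Fin 4, (∏ j ∈ Finset.univ.erase i, B x (σ j) j) = 0 := by
      intro i
      have hmove : ∃ j, j ≠ i ∧ σ j ≠ j := by
        by_contra hcon
        push_neg at hcon
        apply hσ
        have hfix : ∀ j, j ≠ i → σ j = j := hcon
        have hi : σ i = i := by
          by_contra hii
          have h1' : σ (σ i) = σ i := hfix (σ i) hii
          exact hii (σ.injective h1')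
        refine Equiv.ext fun j => ?_
        rcases eq_or_ne j i with rfl | hj
        · simpa using hi
        · simpa using hfix j hj
      obtain ⟨j, hji, hj⟩ := hmove
      apply Finset.prod_eq_zero (Finset.mem_erase.2 ⟨hji, Finset.mem_univ j⟩)
      rw [h1, Matrix.one_apply_ne hj]
    simp [this]
  · simp

section Metric2

variable {U : Set Pt} {g : Pt → Matrix (Fin 4) (Fin 4) ℝ} {x : Pt}

theorem pd_det (hU : IsOpen U) (hg : IsMetricOn g U) (hx : x ∈ U) (c : Fin 4) :
    pd c (fun y => (g y).det) x
      = (g x).det * ∑ a : Fin 4, ∑ b : Fin 4, ginv g x a b * pd c (fun y => g y b a) x := by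
  classical
  set B : Pt → Matrix (Fin 4) (Fin 4) ℝ := fun y => (g x)⁻¹ * g y with hBdef
  have hBent : ∀ a b : Fin 4, (fun y => B y a b) = fun y => ∑ k, ginv g x a k * g y k b := by
    intro a b; funext y; simp [hBdef, Matrix.mul_apply, ginv]
  have hB : ∀ a b : Fin 4, SOn U (fun y => B y a b) := by
    intro a b; rw [hBent a b]
    exact SOn.sum fun k _ => SOn.smul _ (hg.smooth k b)
  have hB1 : B x = 1 := Matrix.nonsing_inv_mul (g x) (isUnit_iff_ne_zero.2 (hg.det_ne x hx))
  have hgdet : (fun y => (g y).det) = fun y => (g x).det * (B y).det := by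
    funext y
    rw [hBdef]
    simp only [Matrix.det_mul, Matrix.det_nonsing_inv]
    rw [Ring.inverse_eq_inv']
    field_simp [hg.det_ne x hx]
  rw [hgdet, pd_const_mul _ ((SOn_det_of_entries hB).diffAt hU hx),
    pd_det_at_one hU hB hx hB1 c]
  congr 1
  apply Finset.sum_congr rfl
  intro a _
  rw [hBent a a, pd_sum (fun k _ => (SOn.diffAt (hg.smooth k a) hU hx).const_mul _)]
  apply Finset.sum_congr rfl
  intro b _
  rw [pd_const_mul _ (SOn.diffAt (hg.smooth b a) hU hx)]

theorem pd_ginv (hU : IsOpen U) (hg : IsMetricOn g U) (hx : x ∈ U) (c a b : Fin 4) :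
    pd c (fun y => ginv g y a b) x
      = -∑ s : Fin 4, ∑ t : Fin 4,
          ginv g x a s * pd c (fun y => g y s t) x * ginv g x t b := by
  classical
  have hdginv : ∀ s t : Fin 4, DifferentiableAt ℝ (fun y => ginv g y s t) x :=
    fun s t => (SOn_ginv hg s t).diffAt hU hx
  have hdg : ∀ s t : Fin 4, DifferentiableAt ℝ (fun y => g y s t) x :=
    fun s t => SOn.diffAt (hg.smooth s t) hU hx
  have key : ∀ t : Fin 4,
      ∑ s : Fin 4, pd c (fun y => ginv g y a s) x * g x s t
        = -∑ s : Fin 4, ginv g x a s * pd c (fun y => g y s t) x := by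
    intro t
    have h0 : pd c (fun y => ∑ s : Fin 4, ginv g y a s * g y s t) x = 0 := by
      rw [pd_congr_on hU hx (h := fun _ => if a = t then (1:ℝ) else 0)
        (fun y hy => ginv_mul_g hg hy a t), pd_const]
    rw [pd_sum (fun s _ => (hdginv a s).fun_mul (hdg s t))] at h0
    have h1 : ∀ s : Fin 4, pd c (fun y => ginv g y a s * g y s t) x
        = pd c (fun y => ginv g y a s) x * g x s t
          + ginv g x a s * pd c (fun y => g y s t) x :=
      fun s => pd_mul (hdginv a s) (hdg s t)
    rw [Finset.sum_congr rfl (fun s _ => h1 s), Finset.sum_add_distrib] at h0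
    linarith [h0]
  have expand : pd c (fun y => ginv g y a b) x
      = ∑ t : Fin 4, (∑ s : Fin 4, pd c (fun y => ginv g y a s) x * g x s t) * ginv g x t b := by
    have swap : ∑ t : Fin 4, (∑ s : Fin 4, pd c (fun y => ginv g y a s) x * g x s t) * ginv g x t b
        = ∑ s : Fin 4, pd c (fun y => ginv g y a s) x * ∑ t : Fin 4, g x s t * ginv g x t b := by
      simp only [Finset.sum_mul, Finset.mul_sum]
      rw [Finset.sum_comm]
      exact Finset.sum_congr rfl fun s _ => Finset.sum_congr rfl fun t _ => by ring
    rw [swap]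
    have : ∀ s : Fin 4, (∑ t : Fin 4, g x s t * ginv g x t b) = if s = b then 1 else 0 :=
      fun s => g_mul_ginv hg hx s b
    simp [this]
  rw [expand]
  simp only [key]
  have lhs_eq : ∑ t : Fin 4, (-∑ s : Fin 4, ginv g x a s * pd c (fun y => g y s t) x) * ginv g x t b
      = ∑ t : Fin 4, ∑ s : Fin 4, -(ginv g x a s * pd c (fun y => g y s t) x * ginv g x t b) := by
    refine Finset.sum_congr rfl fun t _ => ?_
    rw [neg_mul, Finset.sum_mul, ← Finset.sum_neg_distrib]
  rw [lhs_eq, Finset.sum_comm, ← Finset.sum_neg_distrib]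
  exact Finset.sum_congr rfl fun s _ => by rw [← Finset.sum_neg_distrib]

theorem pd_w (hU : IsOpen U) (hg : IsMetricOn g U) (hx : x ∈ U) (c : Fin 4) :
    pd c (fun y => Real.sqrt (adet g y)) x
      = (1/2) * Real.sqrt (adet g x) *
          ∑ a : Fin 4, ∑ b : Fin 4, ginv g x a b * pd c (fun y => g y b a) x := by
  classical
  have hcont : ContinuousAt (fun y => (g y).det) x :=
    ((SOn_det hg).contDiffAt hU hx).continuousAt
  have hdetdiff : DifferentiableAt ℝ (fun y => (g y).det) x := (SOn_det hg).diffAt hU hx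
  have hJ := pd_det hU hg hx c
  have hwpos := w_pos hg hx
  have hwne : Real.sqrt (adet g x) ≠ 0 := ne_of_gt hwpos
  set T := ∑ a : Fin 4, ∑ b : Fin 4, ginv g x a b * pd c (fun y => g y b a) x with hT
  rcases (hg.det_ne x hx).lt_or_gt with hneg | hpos
  · have hev : (fun y => Real.sqrt (adet g y)) =ᶠ[nhds x] fun y => Real.sqrt (-(g y).det) := by
      filter_upwards [hcont.eventually_lt_const hneg] with y hy
      rw [adet, abs_of_neg hy]
    rw [pd_congr hev]
    have hneg2 : HasFDerivAt (fun y => -(g y).det)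
        (-(fderiv ℝ (fun y => (g y).det) x)) x := hdetdiff.hasFDerivAt.neg
    have hcomp : HasFDerivAt (fun y => Real.sqrt (-(g y).det))
        ((1 / (2 * Real.sqrt (-(g x).det))) • (-(fderiv ℝ (fun y => (g y).det) x))) x :=
      (Real.hasDerivAt_sqrt (by linarith)).comp_hasFDerivAt x hneg2
    have hthis : pd c (fun y => Real.sqrt (-(g y).det)) x
        = (1 / (2 * Real.sqrt (-(g x).det))) * (-(pd c (fun y => (g y).det) x)) := by
      unfold pd
      rw [hcomp.fderiv]
      simp
    rw [hthis, hJ]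
    have h1 : Real.sqrt (-(g x).det) = Real.sqrt (adet g x) := by
      rw [adet, abs_of_neg hneg]
    have hsq : Real.sqrt (adet g x) * Real.sqrt (adet g x) = adet g x := by
      have := w_sq hg hx; nlinarith [this]
    have hdet2 : (g x).det = -(Real.sqrt (adet g x) * Real.sqrt (adet g x)) := by
      rw [hsq, adet, abs_of_neg hneg]; ring
    rw [h1, hdet2]
    field_simp
  · have hev : (fun y => Real.sqrt (adet g y)) =ᶠ[nhds x] fun y => Real.sqrt ((g y).det) := by
      filter_upwards [hcont.eventually_const_lt hpos] with y hy
      rw [adet, abs_of_pos hy]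
    rw [pd_congr hev]
    have hcomp : HasFDerivAt (fun y => Real.sqrt ((g y).det))
        ((1 / (2 * Real.sqrt ((g x).det))) • fderiv ℝ (fun y => (g y).det) x) x :=
      (Real.hasDerivAt_sqrt hpos.ne').comp_hasFDerivAt x hdetdiff.hasFDerivAt
    have : pd c (fun y => Real.sqrt ((g y).det)) x
        = (1 / (2 * Real.sqrt ((g x).det))) * pd c (fun y => (g y).det) x := by
      unfold pd
      rw [hcomp.fderiv]
      simp
    rw [this, hJ]
    have h1 : Real.sqrt ((g x).det) = Real.sqrt (adet g x) := by
      rw [adet, abs_of_pos hpos]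
    have hsq : Real.sqrt (adet g x) * Real.sqrt (adet g x) = adet g x := by
      have := w_sq hg hx; nlinarith [this]
    have hdet2 : (g x).det = Real.sqrt (adet g x) * Real.sqrt (adet g x) := by
      rw [hsq, adet, abs_of_pos hpos]
    rw [h1, hdet2]
    field_simp

end Metric2


theorem keyA (R : Fin 4 → Fin 4 → ℝ) (dR : Fin 4 → Fin 4 → Fin 4 → ℝ)
    (ddR : Fin 4 → Fin 4 → Fin 4 → Fin 4 → ℝ)
    (Xv : Fin 4 → ℝ) (dX : Fin 4 → Fin 4 → ℝ) (ddX : Fin 4 → Fin 4 → Fin 4 → ℝ)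
    (dφ : Fin 4 → ℝ) (ddφ : Fin 4 → Fin 4 → ℝ) (d3φ : Fin 4 → Fin 4 → Fin 4 → ℝ)
    (hddφ : ∀ a b, ddφ a b = ddφ b a)
    (hd3a : ∀ a b c, d3φ a b c = d3φ b a c)
    (hd3b : ∀ a b c, d3φ a b c = d3φ a c b)
    (hddX : ∀ a b c, ddX a b c = ddX b a c)
    (hddR : ∀ a b c d, ddR a b c d = ddR b a c d) :
    (∑ α : Fin 4, ∑ β : Fin 4, ∑ γ : Fin 4,
        (dR α α β * dX β γ * dφ γ + R α β * ddX α β γ * dφ γ + R α β * dX β γ * ddφ α γ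
          + dR α α β * Xv γ * ddφ β γ + R α β * dX α γ * ddφ β γ + R α β * Xv γ * d3φ α β γ))
      - (∑ γ : Fin 4, Xv γ * ∑ α : Fin 4, ∑ β : Fin 4,
          (ddR γ α α β * dφ β + dR α α β * ddφ γ β + dR γ α β * ddφ α β + R α β * d3φ γ α β))
    = (∑ c : Fin 4, dX c c) * (∑ α : Fin 4, ∑ β : Fin 4, (dR α α β * dφ β + R α β * ddφ α β))
      - (∑ α : Fin 4, ∑ β : Fin 4,
          (((∑ c : Fin 4, (dX α c * dR c α β + Xv c * ddR α c α β))
            - (∑ c : Fin 4, (dR α c β * dX c α + R c β * ddX α c α))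
            - (∑ c : Fin 4, (dR α α c * dX c β + R α c * ddX α c β))
            + (dR α α β * (∑ c : Fin 4, dX c c) + R α β * (∑ c : Fin 4, ddX α c c))) * dφ β
          + ((∑ c : Fin 4, Xv c * dR c α β) - (∑ c : Fin 4, R c β * dX c α)
              - (∑ c : Fin 4, R α c * dX c β) + R α β * (∑ c : Fin 4, dX c c)) * ddφ α β)) := by
  simp only [Fin.sum_univ_four]
  simp only [hddφ 1 0, hddφ 2 0, hddφ 2 1, hddφ 3 0, hddφ 3 1, hddφ 3 2, hddX 1 0 0, hddX 1 0 1, hddX 1 0 2, hddX 1 0 3, hddX 2 0 0, hddX 2 0 1, hddX 2 0 2, hddX 2 0 3, hddX 2 1 0, hddX 2 1 1, hddX 2 1 2, hddX 2 1 3, hddX 3 0 0, hddX 3 0 1, hddX 3 0 2, hddX 3 0 3, hddX 3 1 0, hddX 3 1 1, hddX 3 1 2, hddX 3 1 3, hddX 3 2 0, hddX 3 2 1, hddX 3 2 2, hddX 3 2 3, hd3a 1 0 0, hd3a 1 0 1, hd3a 1 0 2, hd3a 1 0 3, hd3a 2 0 0, hd3a 2 0 1, hd3a 2 0 2, hd3a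 2 0 3, hd3a 2 1 0, hd3a 2 1 1, hd3a 2 1 2, hd3a 2 1 3, hd3a 3 0 0, hd3a 3 0 1, hd3a 3 0 2, hd3a 3 0 3, hd3a 3 1 0, hd3a 3 1 1, hd3a 3 1 2, hd3a 3 1 3, hd3a 3 2 0, hd3a 3 2 1, hd3a 3 2 2, hd3a 3 2 3, hd3b 0 1 0, hd3b 0 2 0, hd3b 0 2 1, hd3b 0 3 0, hd3b 0 3 1, hd3b 0 3 2, hd3b 1 1 0, hd3b 1 2 0, hd3b 1 2 1, hd3b 1 3 0, hd3b 1 3 1, hd3b 1 3 2, hd3b 2 1 0, hd3b 2 2 0, hd3b 2 2 1, hd3b 2 3 0, hd3b 2 3 1, hd3b 2 3 2, hd3b 3 1 0, hd3b 3 2 0, hd3b 3 2 1, hd3b 3 3 0, hd3b 3 3 1, hd3b 3 3 2, hddR 1 0 0 0, hddR 1 0 0 1, hddR 1 0 0 2, hddR 1 0 0 3, hddR 1 0 1 0, hddR 1 0 1 1, hddR 1 0 1 2, hddR 1 0 1 3, hddR 1 0 2 0, hddR 1 0 2 1, hddR 1 0 2 2, hddR 1 0 2 3, hddR 1 0 3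 0, hddR 1 0 3 1, hddR 1 0 3 2, hddR 1 0 3 3, hddR 2 0 0 0, hddR 2 0 0 1, hddR 2 0 0 2, hddR 2 0 0 3, hddR 2 0 1 0, hddR 2 0 1 1, hddR 2 0 1 2, hddR 2 0 1 3, hddR 2 0 2 0, hddR 2 0 2 1, hddR 2 0 2 2, hddR 2 0 2 3, hddR 2 0 3 0, hddR 2 0 3 1, hddR 2 0 3 2, hddR 2 0 3 3, hddR 2 1 0 0, hddR 2 1 0 1, hddR 2 1 0 2, hddR 2 1 0 3, hddR 2 1 1 0, hddR 2 1 1 1, hddR 2 1 1 2, hddR 2 1 1 3, hddR 2 1 2 0, hddR 2 1 2 1, hddR 2 1 2 2, hddR 2 1 2 3, hddR 2 1 3 0, hddR 2 1 3 1, hddR 2 1 3 2, hddR 2 1 3 3, hddR 3 0 0 0, hddR 3 0 0 1, hddR 3 0 0 2, hddR 3 0 0 3, hddR 3 0 1 0, hddR 3 0 1 1, hddR 3 0 1 2, hddR 3 0 1 3, hddR 3 0 2 0, hddR 3 0 2 1, hddR 3 0 2 2, hddR 3 0 2 3, hddR 3 0 3 0, hddR 3 0 3 1, hddR 3 0 3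 2, hddR 3 0 3 3, hddR 3 1 0 0, hddR 3 1 0 1, hddR 3 1 0 2, hddR 3 1 0 3, hddR 3 1 1 0, hddR 3 1 1 1, hddR 3 1 1 2, hddR 3 1 1 3, hddR 3 1 2 0, hddR 3 1 2 1, hddR 3 1 2 2, hddR 3 1 2 3, hddR 3 1 3 0, hddR 3 1 3 1, hddR 3 1 3 2, hddR 3 1 3 3, hddR 3 2 0 0, hddR 3 2 0 1, hddR 3 2 0 2, hddR 3 2 0 3, hddR 3 2 1 0, hddR 3 2 1 1, hddR 3 2 1 2, hddR 3 2 1 3, hddR 3 2 2 0, hddR 3 2 2 1, hddR 3 2 2 2, hddR 3 2 2 3, hddR 3 2 3 0, hddR 3 2 3 1, hddR 3 2 3 2, hddR 3 2 3 3]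
  ring


-- ## Part 4: second order divergence-form operator and naturality

def Dop (R : Pt → Fin 4 → Fin 4 → ℝ) (φ : Pt → ℝ) (x : Pt) : ℝ :=
  ∑ α : Fin 4, pd α (fun y => ∑ β : Fin 4, R y α β * pd β φ y) x

def LieR (X : Fin 4 → Pt → ℝ) (R : Pt → Fin 4 → Fin 4 → ℝ) (y : Pt) (a b : Fin 4) : ℝ :=
  (∑ c : Fin 4, X c y * pd c (fun z => R z a b) y)
    - (∑ c : Fin 4, R y c b * pd c (X a) y)
    - (∑ c : Fin 4, R y a c * pd c (X b) y)
    + R y a b * (∑ c : Fin 4, pd c (X c) y)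

theorem pd_sub {f h : Pt → ℝ} {x : Pt} {a : Fin 4}
    (hf : DifferentiableAt ℝ f x) (hh : DifferentiableAt ℝ h x) :
    pd a (fun y => f y - h y) x = pd a f x - pd a h x := by
  unfold pd; rw [fderiv_fun_sub hf hh]; rfl

section Part4

variable {U : Set Pt} {R : Pt → Fin 4 → Fin 4 → ℝ} {X : Fin 4 → Pt → ℝ} {ψ φ : Pt → ℝ} {x : Pt}

theorem SOn_Xapp (hU : IsOpen U) (hX : ∀ a, SOn U (X a)) (hφ : SOn U φ) :
    SOn U (Xapp X φ) :=
  SOn.sum fun γ _ => (hX γ).mul (hφ.pd hU γ)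

theorem SOn_LieR (hU : IsOpen U) (hR : ∀ a b, SOn U (fun y => R y a b))
    (hX : ∀ a, SOn U (X a)) (a b : Fin 4) : SOn U (fun y => LieR X R y a b) :=
  ((((SOn.sum fun c (_ : c ∈ Finset.univ) => (hX c).mul ((hR a b).pd hU c)).sub
      (SOn.sum fun c (_ : c ∈ Finset.univ) => (hR c b).mul ((hX a).pd hU c))).sub
      (SOn.sum fun c (_ : c ∈ Finset.univ) => (hR a c).mul ((hX b).pd hU c))).add
      ((hR a b).mul (SOn.sum fun c (_ : c ∈ Finset.univ) => (hX c).pd hU c)))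

theorem SOn_DopInner (hU : IsOpen U) (hR : ∀ a b, SOn U (fun y => R y a b))
    (hψ : SOn U ψ) (α : Fin 4) : SOn U (fun y => ∑ β : Fin 4, R y α β * pd β ψ y) :=
  SOn.sum fun β _ => (hR α β).mul (hψ.pd hU β)

theorem SOn_Dop (hU : IsOpen U) (hR : ∀ a b, SOn U (fun y => R y a b))
    (hψ : SOn U ψ) : SOn U (Dop R ψ) :=
  SOn.sum fun α _ => (SOn_DopInner hU hR hψ α).pd hU α

theorem pd_inner_expand (hU : IsOpen U) (hR : ∀ a b, SOn U (fun y => R y a b))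
    (hψ : SOn U ψ) {y : Pt} (hy : y ∈ U) (α : Fin 4) :
    pd α (fun z => ∑ β : Fin 4, R z α β * pd β ψ z) y
      = ∑ β : Fin 4, (pd α (fun z => R z α β) y * pd β ψ y
          + R y α β * pd α (fun z => pd β ψ z) y) := by
  rw [pd_sum (fun β _ => ((hR α β).diffAt hU hy).fun_mul (((hψ.pd hU β)).diffAt hU hy))]
  exact Finset.sum_congr rfl fun β _ =>
    pd_mul ((hR α β).diffAt hU hy) ((hψ.pd hU β).diffAt hU hy)

theorem pd_Xapp (hU : IsOpen U) (hX : ∀ a, SOn U (X a)) (hφ : SOn U φ)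
    {y : Pt} (hy : y ∈ U) (β : Fin 4) :
    pd β (Xapp X φ) y
      = ∑ γ : Fin 4, (pd β (X γ) y * pd γ φ y + X γ y * pd β (fun z => pd γ φ z) y) := by
  unfold Xapp
  rw [pd_sum (fun γ _ => ((hX γ).diffAt hU hy).fun_mul ((hφ.pd hU γ).diffAt hU hy))]
  exact Finset.sum_congr rfl fun γ _ =>
    pd_mul ((hX γ).diffAt hU hy) ((hφ.pd hU γ).diffAt hU hy)

theorem natural (hU : IsOpen U) (hR : ∀ a b, SOn U (fun y => R y a b))
    (hX : ∀ a, SOn U (X a)) (hφ : SOn U φ) (hx : x ∈ U) :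
    Dop R (Xapp X φ) x - Xapp X (Dop R φ) x
      = (∑ c : Fin 4, pd c (X c) x) * Dop R φ x - Dop (LieR X R) φ x := by
  classical
  -- differentiability of the basic atoms at x
  have dR : ∀ a b, DifferentiableAt ℝ (fun y => R y a b) x :=
    fun a b => (hR a b).diffAt hU hx
  have ddRx : ∀ c a b, DifferentiableAt ℝ (fun y => pd c (fun z => R z a b) y) x :=
    fun c a b => ((hR a b).pd hU c).diffAt hU hx
  have dXv : ∀ a, DifferentiableAt ℝ (X a) x := fun a => (hX a).diffAt hU hx
  have dXd : ∀ c a, DifferentiableAt ℝ (fun y => pd c (X a) y) x :=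
    fun c a => ((hX a).pd hU c).diffAt hU hx
  have dφd : ∀ b, DifferentiableAt ℝ (fun y => pd b φ y) x :=
    fun b => (hφ.pd hU b).diffAt hU hx
  have ddφd : ∀ a b, DifferentiableAt ℝ (fun y => pd a (fun z => pd b φ z) y) x :=
    fun a b => (((hφ.pd hU b)).pd hU a).diffAt hU hx
  -- symmetry facts
  have hddφ : ∀ a b : Fin 4, pd a (fun y => pd b φ y) x = pd b (fun y => pd a φ y) x :=
    fun a b => pd_comm hU hφ hx
  have hd3a : ∀ a b c : Fin 4,
      pd a (fun y => pd b (fun z => pd c φ z) y) x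
        = pd b (fun y => pd a (fun z => pd c φ z) y) x :=
    fun a b c => pd_comm hU (hφ.pd hU c) hx
  have hd3b : ∀ a b c : Fin 4,
      pd a (fun y => pd b (fun z => pd c φ z) y) x
        = pd a (fun y => pd c (fun z => pd b φ z) y) x := by
    intro a b c
    exact pd_congr_on hU hx (fun y hy => pd_comm hU hφ hy)
  have hddX : ∀ a b c : Fin 4,
      pd a (fun y => pd b (X c) y) x = pd b (fun y => pd a (X c) y) x :=
    fun a b c => pd_comm hU (hX c) hx
  have hddR : ∀ a b c d : Fin 4,
      pd a (fun y => pd b (fun z => R z c d) y) x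
        = pd b (fun y => pd a (fun z => R z c d) y) x :=
    fun a b c d => pd_comm hU (hR c d) hx
  -- E1 : expansion of Dop R (Xapp X φ) x
  have E1 : Dop R (Xapp X φ) x
      = ∑ α : Fin 4, ∑ β : Fin 4, ∑ γ : Fin 4,
          (pd α (fun y => R y α β) x * pd β (X γ) x * pd γ φ x
            + R x α β * pd α (fun y => pd β (X γ) y) x * pd γ φ x
            + R x α β * pd β (X γ) x * pd α (fun y => pd γ φ y) x
            + pd α (fun y => R y α β) x * X γ x * pd β (fun y => pd γ φ y) x
            + R x α β * pd α (X γ) x * pd β (fun y => pd γ φ y) x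
            + R x α β * X γ x * pd α (fun y => pd β (fun z => pd γ φ z) y) x) := by
    unfold Dop
    refine Finset.sum_congr rfl fun α _ => ?_
    have hre : pd α (fun y => ∑ β : Fin 4, R y α β * pd β (Xapp X φ) y) x
        = pd α (fun y => ∑ β : Fin 4, ∑ γ : Fin 4,
            (R y α β * (pd β (X γ) y * pd γ φ y)
              + R y α β * (X γ y * pd β (fun z => pd γ φ z) y))) x := by
      refine pd_congr_on hU hx fun y hy => ?_
      refine Finset.sum_congr rfl fun β _ => ?_
      rw [pd_Xapp hU hX hφ hy β, Finset.mul_sum]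
      exact Finset.sum_congr rfl fun γ _ => by ring
    rw [hre]
    rw [pd_sum (fun β _ => DifferentiableAt.fun_sum fun γ _ =>
      ((dR α β).fun_mul ((dXd β γ).fun_mul (dφd γ))).fun_add ((dR α β).fun_mul ((dXv γ).fun_mul (ddφd β γ))))]
    refine Finset.sum_congr rfl fun β _ => ?_
    rw [pd_sum (fun γ _ =>
      ((dR α β).fun_mul ((dXd β γ).fun_mul (dφd γ))).fun_add ((dR α β).fun_mul ((dXv γ).fun_mul (ddφd β γ))))]
    refine Finset.sum_congr rfl fun γ _ => ?_
    rw [pd_add ((dR α β).fun_mul ((dXd β γ).fun_mul (dφd γ))) ((dR α β).fun_mul ((dXv γ).fun_mul (ddφd β γ))),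
      pd_mul (dR α β) ((dXd β γ).fun_mul (dφd γ)),
      pd_mul (dXd β γ) (dφd γ),
      pd_mul (dR α β) ((dXv γ).fun_mul (ddφd β γ)),
      pd_mul (dXv γ) (ddφd β γ)]
    ring
  -- E3 : expansion of Dop R φ x
  have E3 : Dop R φ x
      = ∑ α : Fin 4, ∑ β : Fin 4,
          (pd α (fun y => R y α β) x * pd β φ x
            + R x α β * pd α (fun y => pd β φ y) x) := by
    unfold Dop
    exact Finset.sum_congr rfl fun α _ => pd_inner_expand hU hR hφ hx α
  -- E2 : expansion of Xapp X (Dop R φ) x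
  have E2 : Xapp X (Dop R φ) x
      = ∑ γ : Fin 4, X γ x * ∑ α : Fin 4, ∑ β : Fin 4,
          (pd γ (fun y => pd α (fun z => R z α β) y) x * pd β φ x
            + pd α (fun y => R y α β) x * pd γ (fun y => pd β φ y) x
            + pd γ (fun y => R y α β) x * pd α (fun y => pd β φ y) x
            + R x α β * pd γ (fun y => pd α (fun z => pd β φ z) y) x) := by
    unfold Xapp
    refine Finset.sum_congr rfl fun γ _ => ?_
    congr 1
    have hre : pd γ (Dop R φ) x
        = pd γ (fun y => ∑ α : Fin 4, ∑ β : Fin 4,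
            (pd α (fun z => R z α β) y * pd β φ y
              + R y α β * pd α (fun z => pd β φ z) y)) x := by
      refine pd_congr_on hU hx fun y hy => ?_
      exact Finset.sum_congr rfl fun α _ => pd_inner_expand hU hR hφ hy α
    rw [hre]
    rw [pd_sum (fun α _ => DifferentiableAt.fun_sum fun β _ =>
      ((ddRx α α β).fun_mul (dφd β)).fun_add ((dR α β).fun_mul (ddφd α β)))]
    refine Finset.sum_congr rfl fun α _ => ?_
    rw [pd_sum (fun β _ => ((ddRx α α β).fun_mul (dφd β)).fun_add ((dR α β).fun_mul (ddφd α β)))]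
    refine Finset.sum_congr rfl fun β _ => ?_
    rw [pd_add ((ddRx α α β).fun_mul (dφd β)) ((dR α β).fun_mul (ddφd α β)),
      pd_mul (ddRx α α β) (dφd β), pd_mul (dR α β) (ddφd α β)]
    ring
  -- E4 : expansion of Dop (LieR X R) φ x
  have hLdiff : ∀ a b, DifferentiableAt ℝ (fun y => LieR X R y a b) x :=
    fun a b => (SOn_LieR hU hR hX a b).diffAt hU hx
  have pdLie : ∀ (α a b : Fin 4), pd α (fun y => LieR X R y a b) x
      = (∑ c : Fin 4, (pd α (X c) x * pd c (fun z => R z a b) x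
            + X c x * pd α (fun y => pd c (fun z => R z a b) y) x))
        - (∑ c : Fin 4, (pd α (fun y => R y c b) x * pd c (X a) x
            + R x c b * pd α (fun y => pd c (X a) y) x))
        - (∑ c : Fin 4, (pd α (fun y => R y a c) x * pd c (X b) x
            + R x a c * pd α (fun y => pd c (X b) y) x))
        + (pd α (fun y => R y a b) x * (∑ c : Fin 4, pd c (X c) x)
            + R x a b * (∑ c : Fin 4, pd α (fun y => pd c (X c) y) x)) := by
    intro α a b
    have d1 : DifferentiableAt ℝ (fun y => ∑ c : Fin 4, X c y * pd c (fun z => R z a b) y) x :=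
      DifferentiableAt.fun_sum fun c _ => (dXv c).fun_mul (ddRx c a b)
    have d2 : DifferentiableAt ℝ (fun y => ∑ c : Fin 4, R y c b * pd c (X a) y) x :=
      DifferentiableAt.fun_sum fun c _ => (dR c b).fun_mul (dXd c a)
    have d3 : DifferentiableAt ℝ (fun y => ∑ c : Fin 4, R y a c * pd c (X b) y) x :=
      DifferentiableAt.fun_sum fun c _ => (dR a c).fun_mul (dXd c b)
    have d4 : DifferentiableAt ℝ (fun y => R y a b * ∑ c : Fin 4, pd c (X c) y) x :=
      (dR a b).fun_mul (DifferentiableAt.fun_sum fun c _ => dXd c c)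
    have hLie : (fun y => LieR X R y a b)
        = fun y => (((∑ c : Fin 4, X c y * pd c (fun z => R z a b) y)
            - (∑ c : Fin 4, R y c b * pd c (X a) y))
            - (∑ c : Fin 4, R y a c * pd c (X b) y))
            + R y a b * (∑ c : Fin 4, pd c (X c) y) := rfl
    rw [hLie, pd_add ((d1.fun_sub d2).fun_sub d3) d4, pd_sub (d1.fun_sub d2) d3, pd_sub d1 d2,
      pd_sum (fun c _ => (dXv c).fun_mul (ddRx c a b)),
      pd_sum (fun c _ => (dR c b).fun_mul (dXd c a)),
      pd_sum (fun c _ => (dR a c).fun_mul (dXd c b)),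
      pd_mul (dR a b) (DifferentiableAt.fun_sum fun c _ => dXd c c),
      pd_sum (fun c _ => dXd c c)]
    congr 1
    · congr 1
      · congr 1
        · exact Finset.sum_congr rfl fun c _ => pd_mul (dXv c) (ddRx c a b)
        · exact Finset.sum_congr rfl fun c _ => pd_mul (dR c b) (dXd c a)
      · exact Finset.sum_congr rfl fun c _ => pd_mul (dR a c) (dXd c b)
  have E4 : Dop (LieR X R) φ x
      = ∑ α : Fin 4, ∑ β : Fin 4,
          (((∑ c : Fin 4, (pd α (X c) x * pd c (fun z => R z α β) x
                + X c x * pd α (fun y => pd c (fun z => R z α β) y) x))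
            - (∑ c : Fin 4, (pd α (fun y => R y c β) x * pd c (X α) x
                + R x c β * pd α (fun y => pd c (X α) y) x))
            - (∑ c : Fin 4, (pd α (fun y => R y α c) x * pd c (X β) x
                + R x α c * pd α (fun y => pd c (X β) y) x))
            + (pd α (fun y => R y α β) x * (∑ c : Fin 4, pd c (X c) x)
                + R x α β * (∑ c : Fin 4, pd α (fun y => pd c (X c) y) x))) * pd β φ x
          + ((∑ c : Fin 4, X c x * pd c (fun z => R z α β) x)
              - (∑ c : Fin 4, R x c β * pd c (X α) x)
              - (∑ c : Fin 4, R x α c * pd c (X β) x)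
              + R x α β * (∑ c : Fin 4, pd c (X c) x)) * pd α (fun y => pd β φ y) x) := by
    unfold Dop
    refine Finset.sum_congr rfl fun α _ => ?_
    rw [pd_inner_expand hU (SOn_LieR hU hR hX) hφ hx α]
    refine Finset.sum_congr rfl fun β _ => ?_
    rw [pdLie α α β]
    rfl
  rw [E1, E2, E3, E4]
  exact keyA (fun a b => R x a b) (fun c a b => pd c (fun y => R y a b) x)
    (fun c d a b => pd c (fun y => pd d (fun z => R z a b) y) x)
    (fun c => X c x) (fun c a => pd c (X a) x)
    (fun c d a => pd c (fun y => pd d (X a) y) x)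
    (fun b => pd b φ x) (fun a b => pd a (fun y => pd b φ y) x)
    (fun a b c => pd a (fun y => pd b (fun z => pd c φ z) y) x)
    hddφ hd3a hd3b hddX hddR

end Part4


-- ## Part 5: deformation tensor computations

def XG (g : Pt → Matrix (Fin 4) (Fin 4) ℝ) (X : Fin 4 → Pt → ℝ) (x : Pt) (s t : Fin 4) : ℝ :=
  ∑ c : Fin 4, X c x * pd c (fun y => g y s t) x

def trX (g : Pt → Matrix (Fin 4) (Fin 4) ℝ) (X : Fin 4 → Pt → ℝ) (x : Pt) : ℝ :=
  ∑ s : Fin 4, ∑ t : Fin 4, ginv g x s t * XG g X x s t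

section Part5

variable {U : Set Pt} {g : Pt → Matrix (Fin 4) (Fin 4) ℝ} {X : Fin 4 → Pt → ℝ} {x : Pt}

theorem contrGiG (hg : IsMetricOn g U) (hx : x ∈ U) (F : Fin 4 → ℝ) (b : Fin 4) :
    ∑ c : Fin 4, (∑ t : Fin 4, ginv g x b t * g x t c) * F c = F b := by
  rw [Finset.sum_congr rfl fun c (_ : c ∈ Finset.univ) => by rw [ginv_mul_g hg hx b c]]
  simp

theorem contrGGi (hg : IsMetricOn g U) (hx : x ∈ U) (F : Fin 4 → ℝ) (b : Fin 4) :
    ∑ c : Fin 4, (∑ t : Fin 4, g x b t * ginv g x t c) * F c = F b := by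
  rw [Finset.sum_congr rfl fun c (_ : c ∈ Finset.univ) => by rw [g_mul_ginv hg hx b c]]
  simp

theorem piUp_eq (hg : IsMetricOn g U) (hx : x ∈ U) (a b : Fin 4) :
    piUp g X x a b
      = (∑ s : Fin 4, ∑ t : Fin 4, ginv g x a s * ginv g x b t * XG g X x s t)
        + (∑ s : Fin 4, ginv g x a s * pd s (X b) x)
        + (∑ t : Fin 4, ginv g x b t * pd t (X a) x) := by
  unfold piUp piLow
  have split : ∀ s t : Fin 4,
      ginv g x a s * ginv g x b t *
        ((∑ c : Fin 4, X c x * pd c (fun y => g y s t) x)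
          + (∑ c : Fin 4, g x c t * pd s (X c) x) + (∑ c : Fin 4, g x s c * pd t (X c) x))
      = ginv g x a s * ginv g x b t * XG g X x s t
        + ginv g x a s * ginv g x b t * (∑ c : Fin 4, g x c t * pd s (X c) x)
        + ginv g x a s * ginv g x b t * (∑ c : Fin 4, g x s c * pd t (X c) x) := by
    intro s t; rw [XG]; ring
  rw [Finset.sum_congr rfl fun s (_ : s ∈ Finset.univ) =>
    Finset.sum_congr rfl fun t (_ : t ∈ Finset.univ) => split s t]
  simp only [Finset.sum_add_distrib]
  congr 1
  · congr 1
    refine Finset.sum_congr rfl fun s _ => ?_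
    -- ∑ t, Gi a s * Gi b t * (∑ c, G c t * dX s c) = Gi a s * dX s b
    have h1 : ∀ t : Fin 4, ginv g x a s * ginv g x b t * (∑ c : Fin 4, g x c t * pd s (X c) x)
        = ∑ c : Fin 4, (ginv g x b t * g x t c) * (ginv g x a s * pd s (X c) x) := by
      intro t
      rw [Finset.mul_sum]
      refine Finset.sum_congr rfl fun c _ => ?_
      rw [hg.symm x hx c t]; ring
    rw [Finset.sum_congr rfl fun t (_ : t ∈ Finset.univ) => h1 t, Finset.sum_comm]
    have h2 : ∀ c : Fin 4, ∑ t : Fin 4, (ginv g x b t * g x t c) * (ginv g x a s * pd s (X c) x)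
        = (∑ t : Fin 4, ginv g x b t * g x t c) * (ginv g x a s * pd s (X c) x) := by
      intro c; rw [Finset.sum_mul]
    rw [Finset.sum_congr rfl fun c (_ : c ∈ Finset.univ) => h2 c,
      contrGiG hg hx (fun c => ginv g x a s * pd s (X c) x) b]
  · -- ∑ s ∑ t, Gi a s * Gi b t * (∑ c, G s c * dX t c) = ∑ t, Gi b t * dX t a
    rw [Finset.sum_comm]
    refine Finset.sum_congr rfl fun t _ => ?_
    have h1 : ∀ s : Fin 4, ginv g x a s * ginv g x b t * (∑ c : Fin 4, g x s c * pd t (X c) x)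
        = ∑ c : Fin 4, (ginv g x a s * g x s c) * (ginv g x b t * pd t (X c) x) := by
      intro s
      rw [Finset.mul_sum]
      refine Finset.sum_congr rfl fun c _ => ?_
      ring
    rw [Finset.sum_congr rfl fun s (_ : s ∈ Finset.univ) => h1 s, Finset.sum_comm]
    have h2 : ∀ c : Fin 4, ∑ s : Fin 4, (ginv g x a s * g x s c) * (ginv g x b t * pd t (X c) x)
        = (∑ s : Fin 4, ginv g x a s * g x s c) * (ginv g x b t * pd t (X c) x) := by
      intro c; rw [Finset.sum_mul]
    rw [Finset.sum_congr rfl fun c (_ : c ∈ Finset.univ) => h2 c,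
      contrGiG hg hx (fun c => ginv g x b t * pd t (X c) x) a]

theorem trace_piUp (hg : IsMetricOn g U) (hx : x ∈ U) :
    (∑ γ : Fin 4, ∑ δ : Fin 4, g x γ δ * piUp g X x γ δ)
      = trX g X x + 2 * ∑ c : Fin 4, pd c (X c) x := by
  rw [Finset.sum_congr rfl fun γ (_ : γ ∈ Finset.univ) =>
    Finset.sum_congr rfl fun δ (_ : δ ∈ Finset.univ) => by rw [piUp_eq hg hx γ δ]]
  have split : ∀ γ δ : Fin 4, g x γ δ *
      ((∑ s : Fin 4, ∑ t : Fin 4, ginv g x γ s * ginv g x δ t * XG g X x s t)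
        + (∑ s : Fin 4, ginv g x γ s * pd s (X δ) x)
        + (∑ t : Fin 4, ginv g x δ t * pd t (X γ) x))
      = g x γ δ * (∑ s : Fin 4, ∑ t : Fin 4, ginv g x γ s * ginv g x δ t * XG g X x s t)
        + g x γ δ * (∑ s : Fin 4, ginv g x γ s * pd s (X δ) x)
        + g x γ δ * (∑ t : Fin 4, ginv g x δ t * pd t (X γ) x) := fun γ δ => by ring
  rw [Finset.sum_congr rfl fun γ (_ : γ ∈ Finset.univ) =>
    Finset.sum_congr rfl fun δ (_ : δ ∈ Finset.univ) => split γ δ]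
  simp only [Finset.sum_add_distrib]
  have T1 : ∑ γ : Fin 4, ∑ δ : Fin 4,
      g x γ δ * (∑ s : Fin 4, ∑ t : Fin 4, ginv g x γ s * ginv g x δ t * XG g X x s t)
      = trX g X x := by
    have h1 : ∀ γ : Fin 4, ∑ δ : Fin 4,
        g x γ δ * (∑ s : Fin 4, ∑ t : Fin 4, ginv g x γ s * ginv g x δ t * XG g X x s t)
        = ∑ s : Fin 4, ginv g x γ s * XG g X x s γ := by
      intro γ
      have e1 : ∀ δ : Fin 4,
          g x γ δ * (∑ s : Fin 4, ∑ t : Fin 4, ginv g x γ s * ginv g x δ t * XG g X x s t)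
          = ∑ s : Fin 4, ∑ t : Fin 4,
              (g x γ δ * ginv g x δ t) * (ginv g x γ s * XG g X x s t) := by
        intro δ
        rw [Finset.mul_sum]
        refine Finset.sum_congr rfl fun s _ => ?_
        rw [Finset.mul_sum]
        exact Finset.sum_congr rfl fun t _ => by ring
      rw [Finset.sum_congr rfl fun δ (_ : δ ∈ Finset.univ) => e1 δ, Finset.sum_comm]
      refine Finset.sum_congr rfl fun s _ => ?_
      rw [Finset.sum_comm]
      have e2 : ∀ t : Fin 4, ∑ δ : Fin 4, (g x γ δ * ginv g x δ t) * (ginv g x γ s * XG g X x s t)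
          = (∑ δ : Fin 4, g x γ δ * ginv g x δ t) * (ginv g x γ s * XG g X x s t) := by
        intro t; rw [Finset.sum_mul]
      rw [Finset.sum_congr rfl fun t (_ : t ∈ Finset.univ) => e2 t,
        contrGGi hg hx (fun t => ginv g x γ s * XG g X x s t) γ]
    rw [Finset.sum_congr rfl fun γ (_ : γ ∈ Finset.univ) => h1 γ, Finset.sum_comm]
    unfold trX
    refine Finset.sum_congr rfl fun s _ => ?_
    refine Finset.sum_congr rfl fun γ _ => ?_
    rw [ginv_symm hg hx γ s]
  have T2 : ∑ γ : Fin 4, ∑ δ : Fin 4, g x γ δ * (∑ s : Fin 4, ginv g x γ s * pd s (X δ) x)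
      = ∑ c : Fin 4, pd c (X c) x := by
    have h1 : ∀ δ : Fin 4, ∑ γ : Fin 4, g x γ δ * (∑ s : Fin 4, ginv g x γ s * pd s (X δ) x)
        = pd δ (X δ) x := by
      intro δ
      have e1 : ∀ γ : Fin 4, g x γ δ * (∑ s : Fin 4, ginv g x γ s * pd s (X δ) x)
          = ∑ s : Fin 4, (g x δ γ * ginv g x γ s) * pd s (X δ) x := by
        intro γ
        rw [Finset.mul_sum, hg.symm x hx γ δ]
        exact Finset.sum_congr rfl fun s _ => by ring
      rw [Finset.sum_congr rfl fun γ (_ : γ ∈ Finset.univ) => e1 γ, Finset.sum_comm]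
      have e2 : ∀ s : Fin 4, ∑ γ : Fin 4, (g x δ γ * ginv g x γ s) * pd s (X δ) x
          = (∑ γ : Fin 4, g x δ γ * ginv g x γ s) * pd s (X δ) x := by
        intro s; rw [Finset.sum_mul]
      rw [Finset.sum_congr rfl fun s (_ : s ∈ Finset.univ) => e2 s,
        contrGGi hg hx (fun s => pd s (X δ) x) δ]
    rw [Finset.sum_comm]
    exact Finset.sum_congr rfl fun δ _ => h1 δ
  have T3 : ∑ γ : Fin 4, ∑ δ : Fin 4, g x γ δ * (∑ t : Fin 4, ginv g x δ t * pd t (X γ) x)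
      = ∑ c : Fin 4, pd c (X c) x := by
    have h1 : ∀ γ : Fin 4, ∑ δ : Fin 4, g x γ δ * (∑ t : Fin 4, ginv g x δ t * pd t (X γ) x)
        = pd γ (X γ) x := by
      intro γ
      have e1 : ∀ δ : Fin 4, g x γ δ * (∑ t : Fin 4, ginv g x δ t * pd t (X γ) x)
          = ∑ t : Fin 4, (g x γ δ * ginv g x δ t) * pd t (X γ) x := by
        intro δ
        rw [Finset.mul_sum]
        exact Finset.sum_congr rfl fun t _ => by ring
      rw [Finset.sum_congr rfl fun δ (_ : δ ∈ Finset.univ) => e1 δ, Finset.sum_comm]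
      have e2 : ∀ t : Fin 4, ∑ δ : Fin 4, (g x γ δ * ginv g x δ t) * pd t (X γ) x
          = (∑ δ : Fin 4, g x γ δ * ginv g x δ t) * pd t (X γ) x := by
        intro t; rw [Finset.sum_mul]
      rw [Finset.sum_congr rfl fun t (_ : t ∈ Finset.univ) => e2 t,
        contrGGi hg hx (fun t => pd t (X γ) x) γ]
    exact (Finset.sum_congr rfl fun γ _ => h1 γ).trans rfl
  rw [T1, T2, T3]
  ring

theorem sum_G_Gi (hg : IsMetricOn g U) (hx : x ∈ U) :
    ∑ γ : Fin 4, ∑ δ : Fin 4, g x γ δ * ginv g x γ δ = 4 := by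
  have h1 : ∀ γ : Fin 4, ∑ δ : Fin 4, g x γ δ * ginv g x γ δ = 1 := by
    intro γ
    have e : ∀ δ : Fin 4, g x γ δ * ginv g x γ δ = g x γ δ * ginv g x δ γ := by
      intro δ; rw [ginv_symm hg hx γ δ]
    rw [Finset.sum_congr rfl fun δ (_ : δ ∈ Finset.univ) => e δ, g_mul_ginv hg hx γ γ]
    simp
  rw [Finset.sum_congr rfl fun γ (_ : γ ∈ Finset.univ) => h1 γ]
  norm_num

theorem trace_hatPi (hg : IsMetricOn g U) (hx : x ∈ U) :
    (∑ γ : Fin 4, ∑ δ : Fin 4, g x γ δ * hatPi g X x γ δ)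
      = -(trX g X x + 2 * ∑ c : Fin 4, pd c (X c) x) := by
  have hsplit : ∀ γ δ : Fin 4, g x γ δ * hatPi g X x γ δ
      = g x γ δ * piUp g X x γ δ
        - (1/2) * (g x γ δ * ginv g x γ δ) *
            (∑ γ' : Fin 4, ∑ δ' : Fin 4, g x γ' δ' * piUp g X x γ' δ') := by
    intro γ δ; rw [hatPi]; ring
  rw [Finset.sum_congr rfl fun γ (_ : γ ∈ Finset.univ) =>
    Finset.sum_congr rfl fun δ (_ : δ ∈ Finset.univ) => hsplit γ δ]
  simp only [Finset.sum_sub_distrib, ← Finset.sum_mul, ← Finset.mul_sum]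
  rw [sum_G_Gi hg hx, trace_piUp hg hx]
  ring

end Part5


-- ## B4 : Lie derivative of the density-weighted inverse metric

section Part5b

variable {U : Set Pt} {g : Pt → Matrix (Fin 4) (Fin 4) ℝ} {X : Fin 4 → Pt → ℝ} {x : Pt}

theorem pd_M (hU : IsOpen U) (hg : IsMetricOn g U) (hx : x ∈ U) (c a b : Fin 4) :
    pd c (fun y => Real.sqrt (adet g y) * ginv g y a b) x
      = ((1/2) * Real.sqrt (adet g x)
            * ∑ s : Fin 4, ∑ t : Fin 4, ginv g x s t * pd c (fun y => g y t s) x)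
          * ginv g x a b
        + Real.sqrt (adet g x) *
            (-∑ s : Fin 4, ∑ t : Fin 4,
              ginv g x a s * pd c (fun y => g y s t) x * ginv g x t b) := by
  rw [pd_mul ((SOn_w hU hg).diffAt hU hx) ((SOn_ginv hg a b).diffAt hU hx),
    pd_w hU hg hx c, pd_ginv hU hg hx c a b]

theorem LieM (hU : IsOpen U) (hg : IsMetricOn g U) (hX : ∀ a, SOn U (X a)) (hx : x ∈ U)
    (a b : Fin 4) :
    LieR X (fun y α β => Real.sqrt (adet g y) * ginv g y α β) x a b
      = -(Real.sqrt (adet g x)) * hatPi g X x a b := by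
  have hdgs : ∀ (c u v : Fin 4), pd c (fun y => g y u v) x = pd c (fun y => g y v u) x :=
    fun c u v => pd_congr_on hU hx fun y hy => hg.symm y hy u v
  have hLie : LieR X (fun y α β => Real.sqrt (adet g y) * ginv g y α β) x a b
      = (∑ c : Fin 4, X c x * pd c (fun z => Real.sqrt (adet g z) * ginv g z a b) x)
        - (∑ c : Fin 4, (Real.sqrt (adet g x) * ginv g x c b) * pd c (X a) x)
        - (∑ c : Fin 4, (Real.sqrt (adet g x) * ginv g x a c) * pd c (X b) x)
        + (Real.sqrt (adet g x) * ginv g x a b) * (∑ c : Fin 4, pd c (X c) x) := rfl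
  rw [hLie]
  simp only [pd_M hU hg hx]
  rw [hatPi, trace_piUp hg hx, piUp_eq hg hx a b]
  simp only [trX, XG, Fin.sum_univ_four]
  simp only [ginv_symm hg hx 1 0, ginv_symm hg hx 2 0, ginv_symm hg hx 2 1, ginv_symm hg hx 3 0, ginv_symm hg hx 3 1, ginv_symm hg hx 3 2, ginv_symm hg hx 0 b, ginv_symm hg hx 1 b, ginv_symm hg hx 2 b, ginv_symm hg hx 3 b, hdgs 0 1 0, hdgs 0 2 0, hdgs 0 2 1, hdgs 0 3 0, hdgs 0 3 1, hdgs 0 3 2, hdgs 1 1 0, hdgs 1 2 0, hdgs 1 2 1, hdgs 1 3 0, hdgs 1 3 1, hdgs 1 3 2, hdgs 2 1 0, hdgs 2 2 0, hdgs 2 2 1, hdgs 2 3 0, hdgs 2 3 1, hdgs 2 3 2, hdgs 3 1 0, hdgs 3 2 0, hdgs 3 2 1, hdgs 3 3 0, hdgs 3 3 1, hdgs 3 3 2]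
  ring

theorem Xw (hU : IsOpen U) (hg : IsMetricOn g U) (hx : x ∈ U) :
    ∑ c : Fin 4, X c x * pd c (fun y => Real.sqrt (adet g y)) x
      = 1/2 * Real.sqrt (adet g x) * trX g X x := by
  rw [Finset.sum_congr rfl fun c (_ : c ∈ Finset.univ) => by rw [pd_w hU hg hx c]]
  have hdgs : ∀ (c u v : Fin 4), pd c (fun y => g y u v) x = pd c (fun y => g y v u) x :=
    fun c u v => pd_congr_on hU hx fun y hy => hg.symm y hy u v
  simp only [trX, XG, Fin.sum_univ_four]
  simp only [ginv_symm hg hx 1 0, ginv_symm hg hx 2 0, ginv_symm hg hx 2 1, ginv_symm hg hx 3 0, ginv_symm hg hx 3 1, ginv_symm hg hx 3 2, hdgs 0 1 0, hdgs 0 2 0, hdgs 0 2 1, hdgs 0 3 0, hdgs 0 3 1, hdgs 0 3 2, hdgs 1 1 0, hdgs 1 2 0, hdgs 1 2 1, hdgs 1 3 0, hdgs 1 3 1, hdgs 1 3 2, hdgs 2 1 0, hdgs 2 2 0, hdgs 2 2 1, hdgs 2 3 0, hdgs 2 3 1, hdgs 2 3 2, hdgs 3 1 0, hdgs 3 2 0,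 hdgs 3 2 1, hdgs 3 3 0, hdgs 3 3 1, hdgs 3 3 2]
  ring

end Part5b


-- ## Part 6: assembly

section Assembly

variable {U : Set Pt} {g : Pt → Matrix (Fin 4) (Fin 4) ℝ} {X : Fin 4 → Pt → ℝ} {φ : Pt → ℝ}
  {x : Pt}

theorem pd_neg {f : Pt → ℝ} {x : Pt} {a : Fin 4} :
    pd a (fun y => -f y) x = -pd a f x := by
  unfold pd; rw [fderiv_fun_neg]; simp

theorem Dop_congr_on {R1 R2 : Pt → Fin 4 → Fin 4 → ℝ} (hU : IsOpen U) (hx : x ∈ U)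
    (h : ∀ y ∈ U, ∀ a b, R1 y a b = R2 y a b) : Dop R1 φ x = Dop R2 φ x := by
  unfold Dop
  refine Finset.sum_congr rfl fun α _ => ?_
  refine pd_congr_on hU hx fun y hy => ?_
  exact Finset.sum_congr rfl fun β _ => by rw [h y hy α β]

theorem Dop_neg {S : Pt → Fin 4 → Fin 4 → ℝ} :
    Dop (fun y a b => -(S y a b)) φ x = -Dop S φ x := by
  unfold Dop
  rw [← Finset.sum_neg_distrib]
  refine Finset.sum_congr rfl fun α _ => ?_
  have : (fun y => ∑ β : Fin 4, -(S y α β) * pd β φ y)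
      = fun y => -(∑ β : Fin 4, S y α β * pd β φ y) := by
    funext y
    rw [← Finset.sum_neg_distrib]
    exact Finset.sum_congr rfl fun β _ => by ring
  rw [this, pd_neg]

theorem box_commutator_identity'
    (hU : IsOpen U) (hg : IsMetricOn g U)
    (hX : ∀ α, ContDiffOn ℝ (⊤ : ℕ∞) (X α) U)
    (hφ : ContDiffOn ℝ (⊤ : ℕ∞) φ U) :
    ∀ x ∈ U,
      boxg g (Xapp X φ) x - Xapp X (boxg g φ) x
        = divForm g (fun y α β => hatPi g X y α β) φ x
          - (1/2) * (∑ γ : Fin 4, ∑ δ : Fin 4, g x γ δ * hatPi g X x γ δ) * boxg g φ x := by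
  intro x hx
  have hφ' : SOn U φ := hφ
  have hX' : ∀ a, SOn U (X a) := hX
  have hM : ∀ a b, SOn U (fun y => Real.sqrt (adet g y) * ginv g y a b) :=
    fun a b => (SOn_w hU hg).mul (SOn_ginv hg a b)
  have hwne : Real.sqrt (adet g x) ≠ 0 := ne_of_gt (w_pos hg hx)
  set M : Pt → Fin 4 → Fin 4 → ℝ := fun y α β => Real.sqrt (adet g y) * ginv g y α β with hMdef
  have hMe : ∀ a b, SOn U (fun y => M y a b) := hM
  -- boxg as a Dop
  have hboxf : ∀ ψ : Pt → ℝ, boxg g ψ = fun y => (Real.sqrt (adet g y))⁻¹ * Dop M ψ y := by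
    intro ψ
    funext y
    unfold boxg Dop
    congr 1
    refine Finset.sum_congr rfl fun α _ => ?_
    congr 1
    funext z
    rw [Finset.mul_sum]
    exact Finset.sum_congr rfl fun β _ => by rw [hMdef]; ring
  have hdivf : divForm g (fun y α β => hatPi g X y α β) φ x
      = (Real.sqrt (adet g x))⁻¹
          * Dop (fun y a b => Real.sqrt (adet g y) * hatPi g X y a b) φ x := by
    unfold divForm Dop
    congr 1
    refine Finset.sum_congr rfl fun α _ => ?_
    congr 1
    funext z
    rw [Finset.mul_sum]
    exact Finset.sum_congr rfl fun β _ => by ring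
  -- naturality
  have hnat := natural hU hMe hX' hφ' hx
  -- Lie derivative of M is the normalized deformation tensor
  have hlie : Dop (LieR X M) φ x
      = -Dop (fun y a b => Real.sqrt (adet g y) * hatPi g X y a b) φ x := by
    rw [← Dop_neg]
    refine Dop_congr_on hU hx fun y hy a b => ?_
    rw [LieM hU hg hX' hy a b]
    ring
  -- expansion of Xapp X (boxg g φ) x
  have hDopM : SOn U (Dop M φ) := SOn_Dop hU hMe hφ'
  have hXbox : Xapp X (boxg g φ) x
      = (∑ γ : Fin 4, X γ x * pd γ (fun y => Real.sqrt (adet g y)) x)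
          * (-((Real.sqrt (adet g x))⁻¹ * (Real.sqrt (adet g x))⁻¹) * Dop M φ x)
        + (Real.sqrt (adet g x))⁻¹ * Xapp X (Dop M φ) x := by
    rw [hboxf φ]
    unfold Xapp
    have hterm : ∀ γ : Fin 4,
        pd γ (fun y => (Real.sqrt (adet g y))⁻¹ * Dop M φ y) x
          = -((Real.sqrt (adet g x))^2)⁻¹ * pd γ (fun y => Real.sqrt (adet g y)) x
              * Dop M φ x
            + (Real.sqrt (adet g x))⁻¹ * pd γ (Dop M φ) x := by
      intro γ
      rw [pd_mul (((SOn_w hU hg).diffAt hU hx).fun_inv hwne) (hDopM.diffAt hU hx),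
        pd_inv ((SOn_w hU hg).diffAt hU hx) hwne]
    rw [Finset.sum_congr rfl fun γ (_ : γ ∈ Finset.univ) => by rw [hterm γ]]
    simp only [mul_add, Finset.sum_add_distrib]
    congr 1
    · rw [Finset.sum_mul]
      refine Finset.sum_congr rfl fun γ _ => ?_
      rw [sq]
      ring
    · rw [Finset.mul_sum]
      refine Finset.sum_congr rfl fun γ _ => ?_
      ring
  have hXw := Xw (X := X) hU hg hx
  have htr := trace_hatPi (X := X) hg hx
  have hbx : boxg g φ x = (Real.sqrt (adet g x))⁻¹ * Dop M φ x := by rw [hboxf φ]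
  have hbXφ : boxg g (Xapp X φ) x
      = (Real.sqrt (adet g x))⁻¹ * Dop M (Xapp X φ) x := by rw [hboxf (Xapp X φ)]
  rw [hXbox, hbXφ, hbx, hdivf, htr]
  have hq : (Real.sqrt (adet g x))⁻¹ * Real.sqrt (adet g x) = 1 := inv_mul_cancel₀ hwne
  linear_combination (Real.sqrt (adet g x))⁻¹ * hnat - (Real.sqrt (adet g x))⁻¹ * hlie
    + ((Real.sqrt (adet g x))⁻¹ * (Real.sqrt (adet g x))⁻¹ * Dop M φ x) * hXw
    + (1/2 * trX g X x * (Real.sqrt (adet g x))⁻¹ * Dop M φ x) * hq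

end Assembly


/-- the commutator identity
`[□_g , X]φ = (∇_α π̂^{αβ} ∇_β)φ - (1/2) trace(π̂) □_g φ`. -/
theorem box_commutator_identity
    (U : Set Pt) (hU : IsOpen U)
    (g : Pt → Matrix (Fin 4) (Fin 4) ℝ) (hg : IsMetricOn g U)
    (X : Fin 4 → Pt → ℝ) (hX : ∀ α, ContDiffOn ℝ (⊤ : ℕ∞) (X α) U)
    (φ : Pt → ℝ) (hφ : ContDiffOn ℝ (⊤ : ℕ∞) φ U) :
    ∀ x ∈ U,
      boxg g (Xapp X φ) x - Xapp X (boxg g φ) x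
        = divForm g (fun y α β => hatPi g X y α β) φ x
          - (1/2) * (∑ γ : Fin 4, ∑ δ : Fin 4, g x γ δ * hatPi g X x γ δ) * boxg g φ x :=
  box_commutator_identity' hU hg hX hφ
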